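/- Let L be a finite pure 2-dimensional flag simplicial complex on n vertices whose 1-skeleton L^(1) is connected, and suppose wsat(L^(1), K_3) = n − 1. Then there is a set T of 2-dimensional faces of L such that the complex obtained from L by removing the faces in T is collapsible. -/

import Mathlib

/-- A finite abstract simplicial complex on vertex type `V`: a finite family of
nonempty finite sets closed under taking nonempty subsets. -/
structure SComplex (V : Type*) where
  faces : Finset (Finset V)
  nonempty_mem : ∀ σ ∈ faces, σ.Nonempty
  down_closed : ∀ σ ∈ faces, ∀ τ, τ ⊆ σ → τ.Nonempty → τ ∈ faces

namespace SComplex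

variable {V : Type*}

/-- A facet is an inclusion-maximal face. -/
def IsFacet (K : SComplex V) (σ : Finset V) : Prop :=
  σ ∈ K.faces ∧ ∀ τ ∈ K.faces, σ ⊆ τ → σ = τ

/-- `K` is pure `d`-dimensional: `K` is nonempty and all facets have dimension `d`
(i.e. cardinality `d + 1`). -/
def PureDim (K : SComplex V) (d : ℕ) : Prop :=
  K.faces.Nonempty ∧ ∀ σ, K.IsFacet σ → σ.card = d + 1

/-- The 1-skeleton of a complex, regarded as a simple graph on `V`. -/
def skel1 [DecidableEq V] (K : SComplex V) : SimpleGraph V where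
  Adj u v := u ≠ v ∧ ({u, v} : Finset V) ∈ K.faces
  symm := by
    constructor
    intro u v h
    exact ⟨h.1.symm, by rw [Finset.pair_comm]; exact h.2⟩
  loopless := ⟨fun u h => h.1 rfl⟩

/-- `K` is shellable (as a pure `d`-dimensional complex): its facets can be ordered
`θ₁, …, θₘ` so that for every `i ≥ 2` the complex `K[θᵢ] ∩ K[θ₁, …, θ_{i-1}]` is pure
and `(d-1)`-dimensional, i.e. it is nonempty and all of its facets have cardinality `d`. -/
def Shellable (K : SComplex V) (d : ℕ) : Prop :=
  ∃ l : List (Finset V), l.Nodup ∧ (∀ σ, σ ∈ l ↔ K.IsFacet σ) ∧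
    ∀ i : Fin l.length, 1 ≤ i.val →
      ((∃ σ : Finset V, σ.Nonempty ∧ σ ⊆ l.get i ∧
          ∃ j : Fin l.length, j < i ∧ σ ⊆ l.get j) ∧
       ∀ σ : Finset V,
         (σ.Nonempty ∧ σ ⊆ l.get i ∧ ∃ j : Fin l.length, j < i ∧ σ ⊆ l.get j) →
         (∀ τ : Finset V,
            (τ.Nonempty ∧ τ ⊆ l.get i ∧ ∃ j : Fin l.length, j < i ∧ τ ⊆ l.get j) →
            σ ⊆ τ → σ = τ) →
         σ.card = d)

/-- `K'` arises from `K` by an elementary collapse: there is a face `τ` of `K` contained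
in a single facet `σ` distinct from `τ`, and `K'` is obtained from `K` by removing all
faces containing `τ`. -/
def ElemCollapse (K K' : SComplex V) : Prop :=
  ∃ τ σ : Finset V, τ ∈ K.faces ∧ K.IsFacet σ ∧ τ ≠ σ ∧ τ ⊆ σ ∧
    (∀ ρ, K.IsFacet ρ → τ ⊆ ρ → ρ = σ) ∧
    (∀ ρ, ρ ∈ K'.faces ↔ ρ ∈ K.faces ∧ ¬ τ ⊆ ρ)

/-- `K` collapses to `L` via a finite sequence of elementary collapses. -/
def CollapsesTo (K L : SComplex V) : Prop :=
  Relation.ReflTransGen ElemCollapse K L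

/-- `K` is collapsible: it collapses to a complex consisting of a single vertex. -/
def Collapsible (K : SComplex V) : Prop :=
  ∃ L : SComplex V, K.CollapsesTo L ∧ ∃ v : V, L.faces = {{v}}

/-- The reduced Euler characteristic `χ̃(K) = (Σᵢ (-1)^i fᵢ(K)) - 1`. -/
def redEuler (K : SComplex V) : ℤ :=
  (∑ σ ∈ K.faces, (-1 : ℤ) ^ (σ.card + 1)) - 1

/-- `K` is flag: every (nonempty) set of vertices of `K` that are pairwise joined by
edges of `K` is a face of `K`. -/
def Flag [DecidableEq V] (K : SComplex V) : Prop :=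
  ∀ C : Finset V, C.Nonempty → (∀ a ∈ C, ({a} : Finset V) ∈ K.faces) →
    (∀ a ∈ C, ∀ b ∈ C, a ≠ b → ({a, b} : Finset V) ∈ K.faces) → C ∈ K.faces

/-- The barycentric subdivision of `K`: vertices are the (nonempty) faces of `K`, and
faces are the nonempty collections of faces of `K` that form a chain under inclusion. -/
noncomputable def sd [DecidableEq V] (K : SComplex V) : SComplex (Finset V) := by
  classical
  exact
  { faces := K.faces.powerset.filter
      (fun C => C.Nonempty ∧ ∀ a ∈ C, ∀ b ∈ C, a ⊆ b ∨ b ⊆ a)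
    nonempty_mem := fun C hC => (Finset.mem_filter.mp hC).2.1
    down_closed := by
      intro C hC D hDC hD
      rw [Finset.mem_filter, Finset.mem_powerset] at hC ⊢
      exact ⟨hDC.trans hC.1, hD, fun a ha b hb => hC.2.2 a (hDC ha) b (hDC hb)⟩ }

end SComplex

/-- `es` is a witnessing sequence that `G` is weakly `K₃`-saturated in `F`:
`G` is a spanning subgraph of `F`, `es` is an ordering of the edges of `F` not in `G`,
and adding them one by one, each added edge completes a copy of `K₃` containing it. -/
def WitnessesWeakK3Sat {V : Type*} (F G : SimpleGraph V) (es : List (Sym2 V)) : Prop :=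
  G ≤ F ∧ es.Nodup ∧ (∀ e, e ∈ es ↔ e ∈ F.edgeSet \ G.edgeSet) ∧
    ∀ i : Fin es.length, ∃ x y z : V,
      es.get i = s(x, y) ∧
      (G ⊔ SimpleGraph.fromEdgeSet {e | e ∈ es.take (i.val + 1)}).Adj x y ∧
      (G ⊔ SimpleGraph.fromEdgeSet {e | e ∈ es.take (i.val + 1)}).Adj y z ∧
      (G ⊔ SimpleGraph.fromEdgeSet {e | e ∈ es.take (i.val + 1)}).Adj z x

/-- `G` is weakly `K₃`-saturated in `F`. -/
def WeaklyK3Saturated {V : Type*} (F G : SimpleGraph V) : Prop :=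
  ∃ es : List (Sym2 V), WitnessesWeakK3Sat F G es

/-- The weak saturation number `wsat(F, K₃)`: the minimum number of edges of a graph
weakly `K₃`-saturated in `F`. -/
noncomputable def wsatK3 (V : Type*) [Fintype V] (F : SimpleGraph V) : ℕ :=
  sInf {n | ∃ G : SimpleGraph V, WeaklyK3Saturated F G ∧ G.edgeSet.ncard = n}

set_option linter.unusedSectionVars false
set_option maxHeartbeats 1000000

section AuxLemmas
variable {V : Type*} [DecidableEq V]

lemma pair_eq_cases {a b c d : V} (hab : a ≠ b) (h : ({a, b} : Finset V) = {c, d}) :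
    (a = c ∧ b = d) ∨ (a = d ∧ b = c) := by
  have ha : a ∈ ({c, d} : Finset V) := h ▸ Finset.mem_insert_self a {b}
  have hb : b ∈ ({c, d} : Finset V) := h ▸ Finset.mem_insert_of_mem (Finset.mem_singleton_self b)
  simp only [Finset.mem_insert, Finset.mem_singleton] at ha hb
  rcases ha with rfl | rfl <;> rcases hb with rfl | rfl <;> tauto

lemma pair_eq_sym2 {a b c d : V} (hab : a ≠ b) (h : ({a, b} : Finset V) = {c, d}) :
    s(a, b) = s(c, d) := by
  rcases pair_eq_cases hab h with ⟨rfl, rfl⟩ | ⟨rfl, rfl⟩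
  · rfl
  · exact Sym2.eq_swap

lemma sym2_eq_pair {a b c d : V} (h : s(a, b) = s(c, d)) :
    ({a, b} : Finset V) = {c, d} := by
  rw [Sym2.eq_iff] at h
  rcases h with ⟨rfl, rfl⟩ | ⟨rfl, rfl⟩
  · rfl
  · exact Finset.pair_comm a b

lemma subset_pair_cases {τ : Finset V} {a b : V} (h : τ ⊆ {a, b}) (hc : τ.card = 2) :
    τ = {a, b} := by
  refine Finset.eq_of_subset_of_card_le h ?_
  rw [hc]; exact Finset.card_insert_le a {b} |>.trans (by simp)

lemma subset_triple_cases {τ : Finset V} {a b c : V} (h : τ ⊆ {a, b, c}) (hc : τ.card = 2) :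
    τ = {a, b} ∨ τ = {b, c} ∨ τ = {c, a} := by
  obtain ⟨u, v, huv, rfl⟩ := Finset.card_eq_two.mp hc
  have hu : u ∈ ({a, b, c} : Finset V) := h (Finset.mem_insert_self u {v})
  have hv : v ∈ ({a, b, c} : Finset V) := h (Finset.mem_insert_of_mem (Finset.mem_singleton_self v))
  simp only [Finset.mem_insert, Finset.mem_singleton] at hu hv
  rcases hu with rfl | rfl | rfl <;> rcases hv with rfl | rfl | rfl <;>
    first
      | exact absurd rfl huv
      | exact Or.inl rfl
      | exact Or.inl (Finset.pair_comm u v)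
      | exact Or.inr (Or.inl rfl)
      | exact Or.inr (Or.inl (Finset.pair_comm u v))
      | exact Or.inr (Or.inr rfl)
      | exact Or.inr (Or.inr (Finset.pair_comm u v))

lemma card_triple {a b c : V} (h1 : a ≠ b) (h2 : b ≠ c) (h3 : c ≠ a) :
    ({a, b, c} : Finset V).card = 3 := by
  rw [Finset.card_insert_of_notMem (by simp [h1, h3.symm]),
    Finset.card_insert_of_notMem (by simp [h2]), Finset.card_singleton]

lemma card_pair_le (a b : V) : ({a, b} : Finset V).card ≤ 2 :=
  (Finset.card_insert_le a {b}).trans (by simp)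

lemma card_triple_le (a b c : V) : ({a, b, c} : Finset V).card ≤ 3 :=
  (Finset.card_insert_le a {b, c}).trans (by simpa using Nat.add_le_add_right (card_pair_le b c) 1)

lemma SComplex.ext_faces {K K' : SComplex V} (h : K.faces = K'.faces) : K = K' := by
  cases K; cases K'; cases h; rfl

lemma SComplex.exists_facet (K : SComplex V) {σ : Finset V} (hσ : σ ∈ K.faces) :
    ∃ τ, K.IsFacet τ ∧ σ ⊆ τ := by
  classical
  have hne : (K.faces.filter (fun τ => σ ⊆ τ)).Nonempty :=
    ⟨σ, Finset.mem_filter.mpr ⟨hσ, subset_rfl⟩⟩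
  obtain ⟨b, hb, hmax⟩ := (K.faces.filter (fun τ => σ ⊆ τ)).exists_max_image Finset.card hne
  rw [Finset.mem_filter] at hb
  refine ⟨b, ⟨hb.1, fun ρ hρ hbρ => ?_⟩, hb.2⟩
  have : ρ ∈ K.faces.filter (fun τ => σ ⊆ τ) := Finset.mem_filter.mpr ⟨hρ, hb.2.trans hbρ⟩
  exact Finset.eq_of_subset_of_card_le hbρ (hmax ρ this)

lemma reach_of_forall_adj {H H' : SimpleGraph V} (h : ∀ a b, H.Adj a b → H'.Reachable a b) :
    ∀ a b, H.Reachable a b → H'.Reachable a b := by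
  intro a b ⟨w⟩
  induction w with
  | nil => exact SimpleGraph.Reachable.refl _
  | cons h' _ ih => exact (h _ _ h').trans ih

end AuxLemmas

section Tree
variable {V : Type*} [Fintype V] [DecidableEq V]

open Classical in
/-- The simplicial complex associated to a graph `H` restricted to vertex set `W`. -/
noncomputable def treeC (W : Finset V) (H : SimpleGraph V) : SComplex V where
  faces := Finset.univ.filter (fun σ =>
    (∃ v ∈ W, σ = {v}) ∨ (∃ a b, a ∈ W ∧ b ∈ W ∧ H.Adj a b ∧ σ = {a, b}))
  nonempty_mem := by
    intro σ hσ
    rw [Finset.mem_filter] at hσ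
    rcases hσ.2 with ⟨v, _, rfl⟩ | ⟨a, b, _, _, _, rfl⟩ <;> simp
  down_closed := by
    intro σ hσ τ hτσ hτ
    rw [Finset.mem_filter] at hσ ⊢
    refine ⟨Finset.mem_univ _, ?_⟩
    rcases hσ.2 with ⟨v, hv, rfl⟩ | ⟨a, b, ha, hb, hadj, rfl⟩
    · rcases Finset.subset_singleton_iff.mp hτσ with rfl | rfl
      · exact absurd rfl hτ.ne_empty
      · exact Or.inl ⟨v, hv, rfl⟩
    · have hc1 : 1 ≤ τ.card := Finset.card_pos.mpr hτ
      have hc2 : τ.card ≤ 2 := (Finset.card_le_card hτσ).trans (card_pair_le a b)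
      interval_cases h : τ.card
      · obtain ⟨u, rfl⟩ := Finset.card_eq_one.mp h
        have : u ∈ ({a, b} : Finset V) := hτσ (Finset.mem_singleton_self u)
        simp only [Finset.mem_insert, Finset.mem_singleton] at this
        rcases this with rfl | rfl
        · exact Or.inl ⟨u, ha, rfl⟩
        · exact Or.inl ⟨u, hb, rfl⟩
      · exact Or.inr ⟨a, b, ha, hb, hadj, subset_pair_cases hτσ h⟩

lemma mem_treeC {W : Finset V} {H : SimpleGraph V} {σ : Finset V} :
    σ ∈ (treeC W H).faces ↔
      (∃ v ∈ W, σ = {v}) ∨ (∃ a b, a ∈ W ∧ b ∈ W ∧ H.Adj a b ∧ σ = {a, b}) := by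
  simp [treeC]

lemma reach_del_leaf {H : SimpleGraph V} {v u : V} (hvu : H.Adj v u)
    (hdeg : ∀ w, H.Adj v w → w = u) {a b : V} (h : H.Reachable a b) :
    (H.deleteEdges {s(v, u)}).Reachable
      (if a = v then u else a) (if b = v then u else b) := by
  obtain ⟨w⟩ := h
  induction w with
  | nil => exact SimpleGraph.Reachable.refl _
  | @cons a c b hadj p ih =>
    by_cases hav : a = v
    · have hcu : c = u := hdeg c (hav ▸ hadj)
      have hcv : c ≠ v := by rintro rfl; rw [hav] at hadj; exact H.loopless.irrefl _ hadj
      rw [if_pos hav]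
      simpa [hcv, hcu] using ih
    · by_cases hcv : c = v
      · have hau : a = u := hdeg a (hcv ▸ hadj.symm)
        rw [if_neg hav, hau]
        simpa [hcv] using ih
      · have hadj' : (H.deleteEdges {s(v, u)}).Adj a c := by
          rw [SimpleGraph.deleteEdges_adj]
          refine ⟨hadj, ?_⟩
          simp only [Set.mem_singleton_iff, Sym2.eq_iff]
          rintro (⟨rfl, rfl⟩ | ⟨rfl, rfl⟩)
          · exact hav rfl
          · exact hcv rfl
        simp only [if_neg hav]
        exact (hadj'.reachable).trans (by simpa [hcv] using ih)

lemma treeC_collapsible : ∀ (n : ℕ) (W : Finset V) (H : SimpleGraph V),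
    W.card = n →
    (∀ a b, H.Adj a b → a ∈ W ∧ b ∈ W) →
    (∀ a b, a ∈ W → b ∈ W → H.Reachable a b) →
    H.edgeSet.ncard + 1 = n →
    (treeC W H).Collapsible := by
  intro n
  induction n using Nat.strong_induction_on with
  | _ n ih =>
  intro W H hcard hsupp hreach hE
  classical
  by_cases h1 : W.card = 1
  · obtain ⟨v, rfl⟩ := Finset.card_eq_one.mp h1
    refine ⟨treeC {v} H, Relation.ReflTransGen.refl, v, ?_⟩
    ext σ
    rw [mem_treeC, Finset.mem_singleton]
    constructor
    · rintro (⟨w, hw, rfl⟩ | ⟨a, b, ha, hb, hadj, rfl⟩)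
      · rw [Finset.mem_singleton.mp hw]
      · rw [Finset.mem_singleton] at ha hb
        subst ha; subst hb
        exact absurd hadj (H.loopless.irrefl _)
    · rintro rfl
      exact Or.inl ⟨v, Finset.mem_singleton_self v, rfl⟩
  · have h2 : 2 ≤ W.card := by omega
    letI : DecidableRel H.Adj := Classical.decRel _
    -- edge count
    have hEF' : H.edgeFinset.card + 1 = n := by
      rwa [← Set.ncard_coe_finset, SimpleGraph.coe_edgeFinset]
    have hEF : H.edgeFinset.card = W.card - 1 := by omega
    -- degrees
    have hout : ∀ w, w ∉ W → H.degree w = 0 := by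
      intro w hw
      rw [← SimpleGraph.card_neighborFinset_eq_degree, Finset.card_eq_zero,
        Finset.eq_empty_iff_forall_notMem]
      intro x hx
      rw [SimpleGraph.mem_neighborFinset] at hx
      exact hw (hsupp w x hx).1
    have hsum : ∑ w ∈ W, H.degree w = 2 * (W.card - 1) := by
      rw [Finset.sum_subset (Finset.subset_univ W) (fun x _ hx => hout x hx),
        SimpleGraph.sum_degrees_eq_twice_card_edges, hEF]
    have hdeg1 : ∀ w ∈ W, 1 ≤ H.degree w := by
      intro w hw
      obtain ⟨w', hw', hne⟩ := Finset.exists_mem_ne (s := W) (by omega) w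
      obtain ⟨p⟩ := hreach w w' hw hw'
      cases p with
      | nil => exact absurd rfl hne
      | cons hadj _ =>
        exact (SimpleGraph.degree_pos_iff_exists_adj H w).mpr ⟨_, hadj⟩
    have hleaf : ∃ v ∈ W, H.degree v = 1 := by
      by_contra hno
      push_neg at hno
      have hge : ∀ w ∈ W, 2 ≤ H.degree w := by
        intro w hw
        have := hdeg1 w hw
        have := hno w hw
        omega
      have := Finset.card_nsmul_le_sum W _ 2 hge
      rw [hsum] at this
      simp only [smul_eq_mul] at this
      omega
    obtain ⟨v, hvW, hdegv⟩ := hleaf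
    obtain ⟨u, hu⟩ := Finset.card_eq_one.mp
      (by rwa [← SimpleGraph.card_neighborFinset_eq_degree] at hdegv)
    have hvu : H.Adj v u := by
      rw [← SimpleGraph.mem_neighborFinset, hu]
      exact Finset.mem_singleton_self u
    have hdegu : ∀ w, H.Adj v w → w = u := by
      intro w hw
      have hmem : w ∈ H.neighborFinset v := by
        rw [SimpleGraph.mem_neighborFinset]; exact hw
      rwa [hu, Finset.mem_singleton] at hmem
    have huW : u ∈ W := (hsupp v u hvu).2
    have huv : u ≠ v := hvu.ne'
    set H' := H.deleteEdges {s(v, u)} with hH'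
    set W' := W.erase v with hW'
    have hH'adj : ∀ a b, H'.Adj a b ↔ H.Adj a b ∧ s(a, b) ≠ s(v, u) := by
      intro a b
      rw [hH', SimpleGraph.deleteEdges_adj]
      simp
    have hsupp' : ∀ a b, H'.Adj a b → a ∈ W' ∧ b ∈ W' := by
      intro a b hab
      rw [hH'adj] at hab
      obtain ⟨hab, hne⟩ := hab
      have haW := (hsupp a b hab).1
      have hbW := (hsupp a b hab).2
      have hanv : a ≠ v := by
        rintro rfl
        exact hne (by rw [hdegu b hab])
      have hbnv : b ≠ v := by
        rintro rfl
        exact hne (by rw [hdegu a hab.symm, Sym2.eq_swap])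
      exact ⟨Finset.mem_erase.mpr ⟨hanv, haW⟩, Finset.mem_erase.mpr ⟨hbnv, hbW⟩⟩
    -- the elementary collapse step
    have hstep : SComplex.ElemCollapse (treeC W H) (treeC W' H') := by
      refine ⟨{v}, {v, u}, ?_, ⟨?_, ?_⟩, ?_, by simp, ?_, ?_⟩
      · exact mem_treeC.mpr (Or.inl ⟨v, hvW, rfl⟩)
      · exact mem_treeC.mpr (Or.inr ⟨v, u, hvW, huW, hvu, rfl⟩)
      · intro ρ hρ hsub
        rcases mem_treeC.mp hρ with ⟨w, hw, rfl⟩ | ⟨a, b, ha, hb, hadj, rfl⟩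
        · have : v ∈ ({w} : Finset V) := hsub (Finset.mem_insert_self v {u})
          have hv' : v = w := Finset.mem_singleton.mp this
          have : u ∈ ({w} : Finset V) := hsub (Finset.mem_insert_of_mem (Finset.mem_singleton_self u))
          have hu' : u = w := Finset.mem_singleton.mp this
          exact absurd (hu'.trans hv'.symm) huv
        · exact (subset_pair_cases hsub (Finset.card_pair hvu.ne)).symm ▸ rfl
      · intro h
        have : u ∈ ({v} : Finset V) := h ▸ Finset.mem_insert_of_mem (Finset.mem_singleton_self u)
        exact huv (Finset.mem_singleton.mp this)
      · -- uniqueness of facet containing {v}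
        intro ρ hρf hsub
        have hρ := hρf.1
        have hvρ : v ∈ ρ := hsub (Finset.mem_singleton_self v)
        rcases mem_treeC.mp hρ with ⟨w, hw, rfl⟩ | ⟨a, b, ha, hb, hadj, rfl⟩
        · have hwv : w = v := (Finset.mem_singleton.mp hvρ).symm
          exfalso
          have heq := hρf.2 {v, u} (mem_treeC.mpr (Or.inr ⟨v, u, hvW, huW, hvu, rfl⟩))
            (by rw [hwv]; simp)
          have hcard2 : ({w} : Finset V).card = ({v, u} : Finset V).card := by rw [heq]
          rw [Finset.card_singleton, Finset.card_pair hvu.ne] at hcard2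
          omega
        · simp only [Finset.mem_insert, Finset.mem_singleton] at hvρ
          rcases hvρ with rfl | rfl
          · rw [hdegu b hadj]
          · rw [hdegu a hadj.symm, Finset.pair_comm]
      · intro ρ
        constructor
        · intro hρ
          rcases mem_treeC.mp hρ with ⟨w, hw, rfl⟩ | ⟨a, b, ha, hb, hadj, rfl⟩
          · rw [Finset.mem_erase] at hw
            refine ⟨mem_treeC.mpr (Or.inl ⟨w, hw.2, rfl⟩), ?_⟩
            simp [Finset.singleton_subset_iff, Ne.symm hw.1]
          · rw [Finset.mem_erase] at ha hb
            have hadjH : H.Adj a b := ((hH'adj a b).mp hadj).1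
            refine ⟨mem_treeC.mpr (Or.inr ⟨a, b, ha.2, hb.2, hadjH, rfl⟩), ?_⟩
            simp [Finset.singleton_subset_iff, Ne.symm ha.1, Ne.symm hb.1]
        · rintro ⟨hρ, hnsub⟩
          rw [Finset.singleton_subset_iff] at hnsub
          rcases mem_treeC.mp hρ with ⟨w, hw, rfl⟩ | ⟨a, b, ha, hb, hadj, rfl⟩
          · have hwv : w ≠ v := by rintro rfl; exact hnsub (Finset.mem_singleton_self w)
            exact mem_treeC.mpr (Or.inl ⟨w, Finset.mem_erase.mpr ⟨hwv, hw⟩, rfl⟩)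
          · have hav : a ≠ v := by rintro rfl; exact hnsub (Finset.mem_insert_self a {b})
            have hbv : b ≠ v := by
              rintro rfl
              exact hnsub (Finset.mem_insert_of_mem (Finset.mem_singleton_self b))
            have hadj' : H'.Adj a b := by
              rw [hH'adj]
              refine ⟨hadj, fun h => ?_⟩
              rw [Sym2.eq_iff] at h
              rcases h with ⟨rfl, rfl⟩ | ⟨rfl, rfl⟩
              · exact hav rfl
              · exact hbv rfl
            exact mem_treeC.mpr (Or.inr ⟨a, b, Finset.mem_erase.mpr ⟨hav, ha⟩,
              Finset.mem_erase.mpr ⟨hbv, hb⟩, hadj', rfl⟩)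
    -- apply the induction hypothesis
    have hW'card : W'.card = W.card - 1 := Finset.card_erase_of_mem hvW
    have hreach' : ∀ a b, a ∈ W' → b ∈ W' → H'.Reachable a b := by
      intro a b ha hb
      rw [Finset.mem_erase] at ha hb
      have := reach_del_leaf hvu hdegu (hreach a b ha.2 hb.2)
      rwa [if_neg ha.1, if_neg hb.1] at this
    have hE' : H'.edgeSet.ncard + 1 = W.card - 1 := by
      have hmem : s(v, u) ∈ H.edgeSet := hvu
      have hfin : H.edgeSet.Finite := Set.toFinite _
      have : H'.edgeSet = H.edgeSet \ {s(v, u)} := SimpleGraph.edgeSet_deleteEdges _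
      rw [this, Set.ncard_diff_singleton_of_mem hmem]
      have h1' : 1 ≤ H.edgeSet.ncard := by
        have := (Set.ncard_pos hfin).mpr ⟨_, hmem⟩
        omega
      omega
    obtain ⟨Lf, hcoll, v0, hfaces⟩ :=
      ih (W.card - 1) (by omega) W' H' (by omega) hsupp' hreach' (by omega)
    exact ⟨Lf, Relation.ReflTransGen.head hstep hcoll, v0, hfaces⟩

end Tree

section Phase
variable {V : Type*} [Fintype V] [DecidableEq V]

/-- The predicate defining the intermediate complexes in the triangle-collapsing phase. -/
def phaseP (G : SimpleGraph V) {m : ℕ} (x y z : Fin m → V) (k : ℕ) (σ : Finset V) : Prop :=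
  σ.card = 1 ∨ (∃ a b, G.Adj a b ∧ σ = {a, b}) ∨
    ∃ j : Fin m, j.val < k ∧
      (σ = {x j, y j} ∨ σ = {x j, y j, z j} ∨ σ = {y j, z j} ∨ σ = {z j, x j})

open Classical in
/-- The intermediate complexes in the triangle-collapsing phase. -/
noncomputable def phaseC (G : SimpleGraph V) {m : ℕ} (x y z : Fin m → V) (k : ℕ) :
    SComplex V where
  faces := Finset.univ.filter (phaseP G x y z k)
  nonempty_mem := by
    intro σ hσ
    rw [Finset.mem_filter] at hσ
    rcases hσ.2 with h | ⟨a, b, _, rfl⟩ | ⟨j, _, rfl | rfl | rfl | rfl⟩ <;>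
      first
        | exact Finset.card_pos.mp (by omega)
        | exact Finset.insert_nonempty _ _
  down_closed := by
    intro σ hσ τ hτσ hτ
    rw [Finset.mem_filter] at hσ ⊢
    refine ⟨Finset.mem_univ _, ?_⟩
    have hτ1 : 1 ≤ τ.card := Finset.card_pos.mpr hτ
    by_cases hc1 : τ.card = 1
    · exact Or.inl hc1
    · have hτ2 : 2 ≤ τ.card := by omega
      have hpair : ∀ a b : V, τ ⊆ ({a, b} : Finset V) → τ = {a, b} := by
        intro a b hsub
        have := (Finset.card_le_card hsub).trans (card_pair_le a b)
        exact subset_pair_cases hsub (by omega)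
      rcases hσ.2 with h | ⟨a, b, hadj, rfl⟩ | ⟨j, hj, rfl | rfl | rfl | rfl⟩
      · have := Finset.card_le_card hτσ; omega
      · exact Or.inr (Or.inl ⟨a, b, hadj, hpair a b hτσ⟩)
      · exact Or.inr (Or.inr ⟨j, hj, Or.inl (hpair _ _ hτσ)⟩)
      · by_cases hc2 : τ.card = 2
        · rcases subset_triple_cases hτσ hc2 with h | h | h
          · exact Or.inr (Or.inr ⟨j, hj, Or.inl h⟩)
          · exact Or.inr (Or.inr ⟨j, hj, Or.inr (Or.inr (Or.inl h))⟩)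
          · exact Or.inr (Or.inr ⟨j, hj, Or.inr (Or.inr (Or.inr h))⟩)
        · have h3 : τ.card ≤ 3 := (Finset.card_le_card hτσ).trans (card_triple_le _ _ _)
          have : τ = {x j, y j, z j} :=
            Finset.eq_of_subset_of_card_le hτσ (by have := card_triple_le (x j) (y j) (z j); omega)
          exact Or.inr (Or.inr ⟨j, hj, Or.inr (Or.inl this)⟩)
      · exact Or.inr (Or.inr ⟨j, hj, Or.inr (Or.inr (Or.inl (hpair _ _ hτσ)))⟩)
      · exact Or.inr (Or.inr ⟨j, hj, Or.inr (Or.inr (Or.inr (hpair _ _ hτσ)))⟩)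

lemma mem_phaseC {G : SimpleGraph V} {m : ℕ} {x y z : Fin m → V} {k : ℕ} {σ : Finset V} :
    σ ∈ (phaseC G x y z k).faces ↔ phaseP G x y z k σ := by
  classical
  simp [phaseC]

lemma phaseP_card_le {G : SimpleGraph V} {m : ℕ} {x y z : Fin m → V} {k : ℕ} {σ : Finset V}
    (h : phaseP G x y z k σ) : σ.card ≤ 3 := by
  rcases h with h | ⟨a, b, _, rfl⟩ | ⟨j, _, rfl | rfl | rfl | rfl⟩
  · omega
  · exact (card_pair_le a b).trans (by omega)
  · exact (card_pair_le _ _).trans (by omega)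
  · exact card_triple_le _ _ _
  · exact (card_pair_le _ _).trans (by omega)
  · exact (card_pair_le _ _).trans (by omega)

end Phase

section Phase2
variable {V : Type*} [Fintype V] [DecidableEq V]
variable {G : SimpleGraph V} {m : ℕ} {x y z : Fin m → V}

lemma phase_step
    (Hne : ∀ j : Fin m, x j ≠ y j ∧ y j ≠ z j ∧ z j ≠ x j)
    (HG : ∀ j : Fin m, ¬ G.Adj (x j) (y j))
    (Hinj : ∀ i j : Fin m, ({x i, y i} : Finset V) = {x j, y j} → i = j)
    (Hyz : ∀ j : Fin m, G.Adj (y j) (z j) ∨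
      ∃ i : Fin m, i < j ∧ ({y j, z j} : Finset V) = {x i, y i})
    (Hzx : ∀ j : Fin m, G.Adj (z j) (x j) ∨
      ∃ i : Fin m, i < j ∧ ({z j, x j} : Finset V) = {x i, y i})
    (k : Fin m) :
    SComplex.ElemCollapse (phaseC G x y z (k.val + 1)) (phaseC G x y z k.val) := by
  obtain ⟨hxy, hyz, hzx⟩ := Hne k
  set τ := ({x k, y k} : Finset V) with hτdef
  set σ := ({x k, y k, z k} : Finset V) with hσdef
  have hτcard : τ.card = 2 := Finset.card_pair hxy
  have hσcard : σ.card = 3 := card_triple hxy hyz hzx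
  have hτσ : τ ⊆ σ := by
    intro w hw
    simp only [hτdef, hσdef, Finset.mem_insert, Finset.mem_singleton] at hw ⊢
    tauto
  have keyG : ∀ a b : V, G.Adj a b → τ ≠ {a, b} := by
    intro a b hadj h
    rcases pair_eq_cases hxy h with ⟨h1, h2⟩ | ⟨h1, h2⟩
    · exact HG k (by rw [h1, h2]; exact hadj)
    · exact HG k (by rw [h1, h2]; exact hadj.symm)
  have keyC : ∀ j : Fin m, τ = ({x j, y j} : Finset V) → j = k := by
    intro j h
    exact (Hinj k j h).symm
  have keyA : ∀ j : Fin m, j.val ≤ k.val → τ ≠ ({y j, z j} : Finset V) := by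
    intro j hj h
    rcases Hyz j with hadj | ⟨i, hij, heq⟩
    · exact keyG _ _ hadj h
    · have : k = i := Hinj k i (h.trans heq)
      have : i.val < k.val := lt_of_lt_of_le hij hj
      omega
  have keyB : ∀ j : Fin m, j.val ≤ k.val → τ ≠ ({z j, x j} : Finset V) := by
    intro j hj h
    rcases Hzx j with hadj | ⟨i, hij, heq⟩
    · exact keyG _ _ hadj h
    · have : k = i := Hinj k i (h.trans heq)
      have : i.val < k.val := lt_of_lt_of_le hij hj
      omega
  -- the main classification of faces containing τ
  have hmain : ∀ ρ, phaseP G x y z (k.val + 1) ρ → τ ⊆ ρ → ρ = τ ∨ ρ = σ := by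
    intro ρ hρ hsub
    have hρ2 : 2 ≤ ρ.card := hτcard ▸ Finset.card_le_card hsub
    rcases hρ with h1 | ⟨a, b, hadj, rfl⟩ | ⟨j, hj, rfl | rfl | rfl | rfl⟩
    · omega
    · exact (keyG a b hadj (subset_pair_cases hsub hτcard)).elim
    · exact Or.inl (subset_pair_cases hsub hτcard).symm
    · rcases subset_triple_cases hsub hτcard with h | h | h
      · exact Or.inr (by rw [keyC j h])
      · exact (keyA j (by omega) h).elim
      · exact (keyB j (by omega) h).elim
    · exact (keyA j (by omega) (subset_pair_cases hsub hτcard)).elim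
    · exact (keyB j (by omega) (subset_pair_cases hsub hτcard)).elim
  have hτnot : ¬ phaseP G x y z k.val τ := by
    rintro (h1 | ⟨a, b, hadj, heq⟩ | ⟨j, hj, heq | heq | heq | heq⟩)
    · omega
    · exact keyG a b hadj heq
    · have := keyC j heq; omega
    · rcases subset_triple_cases (by rw [← heq] : τ ⊆ {x j, y j, z j}) hτcard with h | h | h
      · have := keyC j h; omega
      · exact keyA j (by omega) h
      · exact keyB j (by omega) h
    · exact keyA j (by omega) heq
    · exact keyB j (by omega) heq
  have hσnot : ¬ phaseP G x y z k.val σ := by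
    rintro (h1 | ⟨a, b, hadj, heq⟩ | ⟨j, hj, heq | heq | heq | heq⟩)
    · omega
    · have := heq ▸ hσcard; have := card_pair_le a b; omega
    · have := heq ▸ hσcard; have := card_pair_le (x j) (y j); omega
    · rcases subset_triple_cases (by rw [← heq]; exact hτσ : τ ⊆ {x j, y j, z j}) hτcard with h | h | h
      · have := keyC j h; omega
      · exact keyA j (by omega) h
      · exact keyB j (by omega) h
    · have := heq ▸ hσcard; have := card_pair_le (y j) (z j); omega
    · have := heq ▸ hσcard; have := card_pair_le (z j) (x j); omega
  have hσmem : σ ∈ (phaseC G x y z (k.val + 1)).faces :=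
    mem_phaseC.mpr (Or.inr (Or.inr ⟨k, by omega, Or.inr (Or.inl rfl)⟩))
  refine ⟨τ, σ, ?_, ⟨hσmem, ?_⟩, ?_, hτσ, ?_, ?_⟩
  · exact mem_phaseC.mpr (Or.inr (Or.inr ⟨k, by omega, Or.inl rfl⟩))
  · -- σ is a facet
    intro ρ hρ hsub
    have := phaseP_card_le (mem_phaseC.mp hρ)
    exact Finset.eq_of_subset_of_card_le hsub (by omega)
  · -- τ ≠ σ
    intro h
    rw [h] at hτcard
    omega
  · -- uniqueness of the facet containing τ
    intro ρ hρf hsub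
    rcases hmain ρ (mem_phaseC.mp hρf.1) hsub with rfl | rfl
    · have := hρf.2 σ hσmem hτσ
      rw [this] at hτcard
      omega
    · rfl
  · -- description of the new faces
    intro ρ
    rw [mem_phaseC, mem_phaseC]
    constructor
    · intro hρ
      have hρ' : phaseP G x y z (k.val + 1) ρ := by
        rcases hρ with h1 | h2 | ⟨j, hj, hc⟩
        · exact Or.inl h1
        · exact Or.inr (Or.inl h2)
        · exact Or.inr (Or.inr ⟨j, by omega, hc⟩)
      refine ⟨hρ', fun hsub => ?_⟩
      rcases hmain ρ hρ' hsub with rfl | rfl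
      · exact hτnot hρ
      · exact hσnot hρ
    · rintro ⟨h1 | ⟨a, b, hadj, rfl⟩ | ⟨j, hj, hc⟩, hnsub⟩
      · exact Or.inl h1
      · exact Or.inr (Or.inl ⟨a, b, hadj, rfl⟩)
      · by_cases hjk : j.val < k.val
        · exact Or.inr (Or.inr ⟨j, hjk, hc⟩)
        · have hjk' : j = k := by omega
          subst hjk'
          rcases hc with rfl | rfl | rfl | rfl
          · exact absurd subset_rfl hnsub
          · exact absurd hτσ hnsub
          · rcases Hyz j with hadj | ⟨i, hij, heq⟩
            · exact Or.inr (Or.inl ⟨_, _, hadj, rfl⟩)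
            · exact Or.inr (Or.inr ⟨i, by omega, Or.inl heq⟩)
          · rcases Hzx j with hadj | ⟨i, hij, heq⟩
            · exact Or.inr (Or.inl ⟨_, _, hadj, rfl⟩)
            · exact Or.inr (Or.inr ⟨i, by omega, Or.inl heq⟩)

lemma phase_chain
    (Hne : ∀ j : Fin m, x j ≠ y j ∧ y j ≠ z j ∧ z j ≠ x j)
    (HG : ∀ j : Fin m, ¬ G.Adj (x j) (y j))
    (Hinj : ∀ i j : Fin m, ({x i, y i} : Finset V) = {x j, y j} → i = j)
    (Hyz : ∀ j : Fin m, G.Adj (y j) (z j) ∨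
      ∃ i : Fin m, i < j ∧ ({y j, z j} : Finset V) = {x i, y i})
    (Hzx : ∀ j : Fin m, G.Adj (z j) (x j) ∨
      ∃ i : Fin m, i < j ∧ ({z j, x j} : Finset V) = {x i, y i}) :
    ∀ k, k ≤ m → SComplex.CollapsesTo (phaseC G x y z k) (phaseC G x y z 0) := by
  intro k
  induction k with
  | zero => exact fun _ => Relation.ReflTransGen.refl
  | succ k ihk =>
    intro hk
    have hstep := phase_step Hne HG Hinj Hyz Hzx ⟨k, by omega⟩
    exact Relation.ReflTransGen.head hstep (ihk (by omega))

lemma phaseC_zero : phaseC G x y z 0 = treeC Finset.univ G := by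
  apply SComplex.ext_faces
  ext σ
  rw [mem_phaseC, mem_treeC]
  constructor
  · rintro (h1 | ⟨a, b, hadj, rfl⟩ | ⟨j, hj, _⟩)
    · obtain ⟨v, rfl⟩ := Finset.card_eq_one.mp h1
      exact Or.inl ⟨v, Finset.mem_univ v, rfl⟩
    · exact Or.inr ⟨a, b, Finset.mem_univ a, Finset.mem_univ b, hadj, rfl⟩
    · omega
  · rintro (⟨v, _, rfl⟩ | ⟨a, b, _, _, hadj, rfl⟩)
    · exact Or.inl (Finset.card_singleton v)
    · exact Or.inr (Or.inl ⟨a, b, hadj, rfl⟩)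

end Phase2

lemma skel1_adj {V : Type*} [DecidableEq V] (L : SComplex V) (a b : V) :
    L.skel1.Adj a b ↔ a ≠ b ∧ ({a, b} : Finset V) ∈ L.faces := Iff.rfl

/-- If `L` is a finite pure 2-dimensional flag complex on `n` vertices whose
1-skeleton is connected and `wsat(L⁽¹⁾, K₃) = n - 1`, then `L` becomes collapsible after
removing some set of 2-dimensional faces. -/
theorem collapsible_after_removing_triangles_of_wsat {V : Type*} [Fintype V] [DecidableEq V]
    (L : SComplex V) (hvert : ∀ v : V, ({v} : Finset V) ∈ L.faces)
    (hpure : L.PureDim 2) (hflag : L.Flag)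
    (hconn : L.skel1.Connected)
    (hwsat : wsatK3 V L.skel1 = Fintype.card V - 1) :
    ∃ T : Finset (Finset V), T ⊆ L.faces ∧ (∀ σ ∈ T, σ.card = 3) ∧
      ∃ L' : SComplex V, (∀ ρ, ρ ∈ L'.faces ↔ ρ ∈ L.faces ∧ ρ ∉ T) ∧ L'.Collapsible := by
  classical
  set F := L.skel1 with hFdef
  -- extract a minimum-size weakly saturated graph; it has `n - 1` edges
  have hSne : {n | ∃ G : SimpleGraph V, WeaklyK3Saturated F G ∧ G.edgeSet.ncard = n}.Nonempty := by
    refine ⟨F.edgeSet.ncard, F, ⟨[], le_rfl, List.nodup_nil, ?_, fun i => absurd i.isLt (by simp)⟩,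
      rfl⟩
    intro e
    simp
  have hmem : Fintype.card V - 1 ∈
      {n | ∃ G : SimpleGraph V, WeaklyK3Saturated F G ∧ G.edgeSet.ncard = n} :=
    hwsat ▸ Nat.sInf_mem hSne
  obtain ⟨G, ⟨es, hGF, hnodup, hmem_es, htri⟩, hGcard⟩ := hmem
  choose x y z hexy hAxy hAyz hAzx using htri
  -- index arithmetic on the saturation sequence
  have htake : ∀ (k : ℕ) (s : Sym2 V), s ∈ es.take k →
      ∃ i : Fin es.length, i.val < k ∧ es.get i = s := by
    intro k s hs
    rw [List.mem_take_iff_getElem] at hs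
    obtain ⟨i, hi, he⟩ := hs
    exact ⟨⟨i, (lt_min_iff.mp hi).2⟩, (lt_min_iff.mp hi).1, he⟩
  have Hne : ∀ j : Fin es.length, x j ≠ y j ∧ y j ≠ z j ∧ z j ≠ x j := fun j =>
    ⟨(hAxy j).ne, (hAyz j).ne, (hAzx j).ne⟩
  have hes_e : ∀ j : Fin es.length, es.get j ∈ F.edgeSet \ G.edgeSet := fun j =>
    (hmem_es (es.get j)).mp (es.get_mem j)
  have HG : ∀ j : Fin es.length, ¬ G.Adj (x j) (y j) := by
    intro j h
    exact (hes_e j).2 (by rw [hexy j]; exact h)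
  have Hinj : ∀ i j : Fin es.length, ({x i, y i} : Finset V) = {x j, y j} → i = j := by
    intro i j h
    have : es.get i = es.get j := by
      rw [hexy i, hexy j]
      exact pair_eq_sym2 (Hne i).1 h
    exact (List.nodup_iff_injective_get.mp hnodup) this
  -- the two other edges of the `j`-th triangle appear earlier
  have Hside : ∀ (j : Fin es.length) (a b : V),
      (G ⊔ SimpleGraph.fromEdgeSet {e | e ∈ es.take (j.val + 1)}).Adj a b →
      s(a, b) ≠ es.get j →
      G.Adj a b ∨ ∃ i : Fin es.length, i < j ∧ ({a, b} : Finset V) = {x i, y i} := by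
    intro j a b hadj hne
    rcases hadj with hadj | hadj
    · exact Or.inl hadj
    · rw [SimpleGraph.fromEdgeSet_adj] at hadj
      obtain ⟨i, hik, hei⟩ := htake _ _ hadj.1
      have hij : i ≠ j := by
        rintro rfl
        exact hne hei.symm
      refine Or.inr ⟨i, ?_, ?_⟩
      · rw [Fin.lt_def]
        rcases Fin.val_ne_of_ne hij |>.lt_or_gt with h | h
        · exact h
        · omega
      · have : s(a, b) = s(x i, y i) := by rw [← hei, hexy i]
        exact sym2_eq_pair this
  have Hyz : ∀ j : Fin es.length, G.Adj (y j) (z j) ∨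
      ∃ i : Fin es.length, i < j ∧ ({y j, z j} : Finset V) = {x i, y i} := by
    intro j
    refine Hside j (y j) (z j) (hAyz j) fun h => ?_
    rw [hexy j, Sym2.eq_iff] at h
    rcases h with ⟨h1, h2⟩ | ⟨h1, h2⟩
    · exact (Hne j).1 h1.symm
    · exact (Hne j).2.2 h2
  have Hzx : ∀ j : Fin es.length, G.Adj (z j) (x j) ∨
      ∃ i : Fin es.length, i < j ∧ ({z j, x j} : Finset V) = {x i, y i} := by
    intro j
    refine Hside j (z j) (x j) (hAzx j) fun h => ?_
    rw [hexy j, Sym2.eq_iff] at h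
    rcases h with ⟨h1, h2⟩ | ⟨h1, h2⟩
    · exact (Hne j).2.2 h1
    · exact (Hne j).2.1 h1.symm
  -- `G` is connected
  have reachE : ∀ (n : ℕ) (i : Fin es.length), i.val = n → G.Reachable (x i) (y i) := by
    intro n
    induction n using Nat.strong_induction_on with
    | _ n ih =>
    intro i hi
    have hside : ∀ a b : V, (G.Adj a b ∨
        ∃ i' : Fin es.length, i' < i ∧ ({a, b} : Finset V) = {x i', y i'}) →
        G.Reachable a b := by
      rintro a b (hadj | ⟨i', hi', heq⟩)
      · exact hadj.reachable
      · by_cases hab : a = b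
        · exact hab ▸ SimpleGraph.Reachable.refl a
        · have hr : G.Reachable (x i') (y i') := ih i'.val (by rw [← hi]; exact hi') i' rfl
          rcases pair_eq_cases hab heq with ⟨h1, h2⟩ | ⟨h1, h2⟩
          · rw [h1, h2]; exact hr
          · rw [h1, h2]; exact hr.symm
    have ryz : G.Reachable (y i) (z i) := hside _ _ (Hyz i)
    have rzx : G.Reachable (z i) (x i) := hside _ _ (Hzx i)
    exact rzx.symm.trans ryz.symm
  have hGreach : ∀ a b : V, G.Reachable a b := by
    intro a b
    refine reach_of_forall_adj ?_ a b (hconn.preconnected a b)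
    intro a b hadj
    have hab : a ≠ b := hadj.ne
    by_cases hG : s(a, b) ∈ G.edgeSet
    · exact ((SimpleGraph.mem_edgeSet _).mp hG).reachable
    · obtain ⟨i, hei⟩ := List.mem_iff_get.mp
        ((hmem_es s(a, b)).mpr ⟨(SimpleGraph.mem_edgeSet _).mpr hadj, hG⟩)
      have heq : ({a, b} : Finset V) = {x i, y i} :=
        sym2_eq_pair (by rw [← hei, hexy i])
      have hr := reachE i.val i rfl
      rcases pair_eq_cases hab heq with ⟨h1, h2⟩ | ⟨h1, h2⟩
      · rw [h1, h2]; exact hr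
      · rw [h1, h2]; exact hr.symm
  -- the tree part is collapsible
  have hcardV : 1 ≤ Fintype.card V := @Fintype.card_pos V _ hconn.nonempty
  obtain ⟨Lf, hcoll0, v0, hf0⟩ :=
    treeC_collapsible (Fintype.card V) Finset.univ G Finset.card_univ
      (fun a b _ => ⟨Finset.mem_univ a, Finset.mem_univ b⟩)
      (fun a b _ _ => hGreach a b) (by omega)
  -- the full pruned complex is collapsible
  have hchain : SComplex.CollapsesTo (phaseC G x y z es.length) (phaseC G x y z 0) :=
    phase_chain Hne HG Hinj Hyz Hzx es.length le_rfl
  have hcollapsible : (phaseC G x y z es.length).Collapsible := by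
    refine ⟨Lf, hchain.trans ?_, v0, hf0⟩
    rw [phaseC_zero]
    exact hcoll0
  -- compare the faces of the pruned complex with those of `L`
  set M := (phaseC G x y z es.length).faces with hMdef
  have hFadj_face : ∀ a b : V, F.Adj a b → ({a, b} : Finset V) ∈ L.faces := fun a b h =>
    ((skel1_adj L a b).mp h).2
  have hGadj_face : ∀ a b : V, G.Adj a b → ({a, b} : Finset V) ∈ L.faces := fun a b h =>
    hFadj_face a b (hGF h)
  have hexy_adj : ∀ i : Fin es.length, F.Adj (x i) (y i) := by
    intro i
    have := (hes_e i).1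
    rw [hexy i] at this
    exact (SimpleGraph.mem_edgeSet _).mp this
  have hE_face : ∀ i : Fin es.length, ({x i, y i} : Finset V) ∈ L.faces := fun i =>
    hFadj_face _ _ (hexy_adj i)
  have hyz_face : ∀ i : Fin es.length, ({y i, z i} : Finset V) ∈ L.faces := by
    intro i
    rcases Hyz i with h | ⟨i', _, heq⟩
    · exact hGadj_face _ _ h
    · rw [heq]; exact hE_face i'
  have hzx_face : ∀ i : Fin es.length, ({z i, x i} : Finset V) ∈ L.faces := by
    intro i
    rcases Hzx i with h | ⟨i', _, heq⟩
    · exact hGadj_face _ _ h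
    · rw [heq]; exact hE_face i'
  have htri_face : ∀ i : Fin es.length, ({x i, y i, z i} : Finset V) ∈ L.faces := by
    intro i
    apply hflag _ (Finset.insert_nonempty _ _)
    · intro a _
      exact hvert a
    · intro a ha b hb hab
      simp only [Finset.mem_insert, Finset.mem_singleton] at ha hb
      rcases ha with rfl | rfl | rfl <;> rcases hb with rfl | rfl | rfl <;>
        first
          | exact absurd rfl hab
          | exact hE_face i
          | exact hyz_face i
          | exact hzx_face i
          | (rw [Finset.pair_comm]
             first
               | exact hE_face i
               | exact hyz_face i
               | exact hzx_face i)
  have hM_sub : ∀ ρ ∈ M, ρ ∈ L.faces := by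
    intro ρ hρ
    rcases mem_phaseC.mp hρ with h1 | ⟨a, b, hadj, rfl⟩ | ⟨j, _, rfl | rfl | rfl | rfl⟩
    · obtain ⟨v, rfl⟩ := Finset.card_eq_one.mp h1
      exact hvert v
    · exact hGadj_face a b hadj
    · exact hE_face j
    · exact htri_face j
    · exact hyz_face j
    · exact hzx_face j
  have hcard3 : ∀ ρ ∈ L.faces, ρ.card ≤ 3 := by
    intro ρ hρ
    obtain ⟨τf, hτf, hsub⟩ := L.exists_facet hρ
    have h1 := hpure.2 τf hτf
    have h2 := Finset.card_le_card hsub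
    omega
  have hsub2 : ∀ ρ ∈ L.faces, ρ.card ≤ 2 → ρ ∈ M := by
    intro ρ hρ hc
    have h1 : 1 ≤ ρ.card := Finset.card_pos.mpr (L.nonempty_mem ρ hρ)
    by_cases hc1 : ρ.card = 1
    · exact mem_phaseC.mpr (Or.inl hc1)
    · have hc2 : ρ.card = 2 := by omega
      obtain ⟨a, b, hab, rfl⟩ := Finset.card_eq_two.mp hc2
      have hadjF : F.Adj a b := (skel1_adj L a b).mpr ⟨hab, hρ⟩
      by_cases hG : s(a, b) ∈ G.edgeSet
      · exact mem_phaseC.mpr (Or.inr (Or.inl ⟨a, b, (SimpleGraph.mem_edgeSet _).mp hG, rfl⟩))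
      · obtain ⟨i, hei⟩ := List.mem_iff_get.mp
          ((hmem_es s(a, b)).mpr ⟨(SimpleGraph.mem_edgeSet _).mpr hadjF, hG⟩)
        have heq : ({a, b} : Finset V) = {x i, y i} :=
          sym2_eq_pair (by rw [← hei, hexy i])
        exact mem_phaseC.mpr (Or.inr (Or.inr ⟨i, i.isLt, Or.inl heq⟩))
  refine ⟨L.faces \ M, Finset.sdiff_subset, ?_, phaseC G x y z es.length, ?_, hcollapsible⟩
  · intro σ hσ
    rw [Finset.mem_sdiff] at hσ
    have h3 := hcard3 σ hσ.1
    have h1 : 1 ≤ σ.card := Finset.card_pos.mpr (L.nonempty_mem σ hσ.1)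
    by_contra hne3
    exact hσ.2 (hsub2 σ hσ.1 (by omega))
  · intro ρ
    constructor
    · intro h
      refine ⟨hM_sub ρ h, ?_⟩
      rw [Finset.mem_sdiff]
      push_neg
      exact fun _ => h
    · rintro ⟨hL', hT⟩
      rw [Finset.mem_sdiff] at hT
      push_neg at hT
      exact hT hL'
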